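/- In the Euclidean bilevel setting, assume ‖∇²_{yx} g(x,y)‖ ≤ L for all (x,y), that for every y the map x ↦ ∇_y g(x,y) is L-Lipschitz, and that the operator-valued maps (x,y) ↦ ∇²_{yy} g(x,y) and (x,y) ↦ ∇²_{yx} g(x,y) are ρ-Lipschitz in operator norm in each variable separately. Define T(x) := (∇²_{yy} g(x, y*(x)))⁻¹ ∘ ∇²_{yx} g(x, y*(x)) : H₁ → H₂ (which equals −D y*(x)). Then ‖T(x)‖ ≤ L/μ for every x, and T is Lipschitz in x: ‖T(x₁) − T(x₂)‖ ≤ (L²ρ/μ³ + 2Lρ/μ² + ρ/μ) ‖x₁ − x₂‖ for all x₁, x₂ ∈ H₁. -/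

import Mathlib

open scoped RealInnerProductSpace

variable {H₁ : Type*} [NormedAddCommGroup H₁] [InnerProductSpace ℝ H₁] [FiniteDimensional ℝ H₁]
variable {H₂ : Type*} [NormedAddCommGroup H₂] [InnerProductSpace ℝ H₂] [FiniteDimensional ℝ H₂]

/-- Partial gradient of a bifunction in the first variable: `∇ₓ f (x, y)`. -/
noncomputable def gradx (f : H₁ → H₂ → ℝ) (x : H₁) (y : H₂) : H₁ :=
  gradient (fun x' => f x' y) x

/-- Partial gradient of a bifunction in the second variable: `∇_y f (x, y)`. -/
noncomputable def grady (f : H₁ → H₂ → ℝ) (x : H₁) (y : H₂) : H₂ :=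
  gradient (fun y' => f x y') y

/-- Partial Hessian `∇²_{yy} g(x,y)`, a continuous linear operator on `H₂`. -/
noncomputable def hessyy (g : H₁ → H₂ → ℝ) (x : H₁) (y : H₂) : H₂ →L[ℝ] H₂ :=
  fderiv ℝ (fun y' => grady g x y') y

/-- Cross derivative `∇²_{yx} g(x,y) : H₁ → H₂`, the derivative in `x` of `∇_y g`. -/
noncomputable def hessyx (g : H₁ → H₂ → ℝ) (x : H₁) (y : H₂) : H₁ →L[ℝ] H₂ :=
  fderiv ℝ (fun x' => grady g x' y) x

/-- Cross derivative `∇²_{xy} g(x,y) : H₂ → H₁`, the adjoint of `∇²_{yx} g(x,y)`. -/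
noncomputable def hessxy (g : H₁ → H₂ → ℝ) (x : H₁) (y : H₂) : H₂ →L[ℝ] H₁ :=
  ContinuousLinearMap.adjoint (hessyx g x y)

set_option linter.unusedSectionVars false in
/-- Auxiliary: `y' ↦ ∇_y g(x,y')` has derivative `hessyy g x y` at `y`. -/
theorem grady_hasFDerivAt' (g : H₁ → H₂ → ℝ) (hg : ContDiff ℝ 2 fun p : H₁ × H₂ => g p.1 p.2)
    (x : H₁) (y : H₂) : HasFDerivAt (fun y' => grady g x y') (hessyy g x y) y := by
  have h2 : ContDiff ℝ 2 (fun y' : H₂ => g x y') :=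
    hg.comp (ContDiff.prodMk contDiff_const contDiff_id)
  have hf : ContDiff ℝ 1 (fun y' : H₂ => fderiv ℝ (fun y'' => g x y'') y') :=
    h2.fderiv_right (by norm_num)
  have hgr : ContDiff ℝ 1 (fun y' : H₂ => grady g x y') := by
    have : (fun y' : H₂ => grady g x y') =
        fun y' => (InnerProductSpace.toDual ℝ H₂).symm (fderiv ℝ (fun y'' => g x y'') y') := by
      funext y'; rfl
    rw [this]
    exact (InnerProductSpace.toDual ℝ H₂).symm.contDiff.comp hf
  exact ((hgr.differentiable one_ne_zero) y).hasFDerivAt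

set_option linter.unusedSectionVars false in
/-- Auxiliary: strong monotonicity of `∇_y g(x, ·)` from the Hessian lower bound. -/
theorem grady_strong_mono' (g : H₁ → H₂ → ℝ) (μ : ℝ)
    (hg : ContDiff ℝ 2 fun p : H₁ × H₂ => g p.1 p.2)
    (hpos : ∀ (x : H₁) (y v : H₂), μ * ‖v‖ ^ 2 ≤ ⟪hessyy g x y v, v⟫)
    (x : H₁) (y₁ y₂ : H₂) :
    μ * ‖y₁ - y₂‖ ^ 2 ≤ ⟪grady g x y₁ - grady g x y₂, y₁ - y₂⟫ := by
  set d := y₁ - y₂ with hd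
  set c : ℝ → H₂ := fun t => y₂ + t • d with hc
  have hcder : ∀ t : ℝ, HasDerivAt c d t := by
    intro t
    have := ((hasDerivAt_id t).smul_const d).const_add y₂
    rw [one_smul] at this
    exact this
  set G : ℝ → ℝ := fun t => ⟪d, grady g x (c t)⟫ with hGdef
  have hGder : ∀ t : ℝ, HasDerivAt G ⟪d, hessyy g x (c t) d⟫ t := by
    intro t
    have h1 : HasDerivAt (fun t => grady g x (c t)) (hessyy g x (c t) d) t :=
      (grady_hasFDerivAt' g hg x (c t)).comp_hasDerivAt t (hcder t)
    exact ((innerSL ℝ d).hasFDerivAt.comp_hasDerivAt t h1)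
  clear_value d c G
  obtain ⟨tc, htc, heq⟩ := exists_hasDerivAt_eq_slope G (fun t => ⟪d, hessyy g x (c t) d⟫)
    (by norm_num : (0:ℝ) < 1)
    (fun t _ => (hGder t).continuousAt.continuousWithinAt) (fun t _ => hGder t)
  have hc1 : c 1 = y₁ := by simp [hc, hd]
  have hc0 : c 0 = y₂ := by simp [hc]
  have : μ * ‖d‖ ^ 2 ≤ ⟪d, hessyy g x (c tc) d⟫ := by
    have := hpos x (c tc) d
    rwa [real_inner_comm] at this
  rw [heq] at this
  simp only [hGdef, hc1, hc0, sub_zero, div_one] at this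
  calc μ * ‖d‖ ^ 2 ≤ ⟪d, grady g x y₁⟫ - ⟪d, grady g x y₂⟫ := this
    _ = ⟪grady g x y₁ - grady g x y₂, d⟫ := by
        rw [inner_sub_left, real_inner_comm d, real_inner_comm d]

/-- In the Euclidean bilevel setting, with `‖∇²_{yx} g‖ ≤ L`, `x ↦ ∇_y g(x,y)`
`L`-Lipschitz, and `∇²_{yy} g`, `∇²_{yx} g` `ρ`-Lipschitz in operator norm in each variable,
the operator `T(x) := (∇²_{yy} g(x, y*(x)))⁻¹ ∘ ∇²_{yx} g(x, y*(x))` (`= −D y*(x)`) satisfies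
`‖T(x)‖ ≤ L/μ` and `‖T(x₁) − T(x₂)‖ ≤ (L²ρ/μ³ + 2Lρ/μ² + ρ/μ) ‖x₁ − x₂‖`. -/
theorem statement3
    (g : H₁ → H₂ → ℝ) (μ L ρ : ℝ) (hμ : 0 < μ) (hL : 0 ≤ L) (hρ : 0 ≤ ρ)
    (hg : ContDiff ℝ 2 fun p : H₁ × H₂ => g p.1 p.2)
    -- `∇²_{yy} g(x,y) ⪰ μ · id` for all `(x,y)`
    (hpos : ∀ (x : H₁) (y v : H₂), μ * ‖v‖ ^ 2 ≤ ⟪hessyy g x y v, v⟫)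
    -- `‖∇²_{yx} g(x,y)‖ ≤ L` for all `(x,y)`
    (hyxbd : ∀ (x : H₁) (y : H₂), ‖hessyx g x y‖ ≤ L)
    -- `x ↦ ∇_y g(x,y)` is `L`-Lipschitz for every `y`
    (hlipx : ∀ (y : H₂) (x₁ x₂ : H₁), ‖grady g x₁ y - grady g x₂ y‖ ≤ L * ‖x₁ - x₂‖)
    -- `(x,y) ↦ ∇²_{yy} g(x,y)` is `ρ`-Lipschitz in operator norm in each variable
    (hyyLx : ∀ (y : H₂) (x₁ x₂ : H₁), ‖hessyy g x₁ y - hessyy g x₂ y‖ ≤ ρ * ‖x₁ - x₂‖)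
    (hyyLy : ∀ (x : H₁) (y₁ y₂ : H₂), ‖hessyy g x y₁ - hessyy g x y₂‖ ≤ ρ * ‖y₁ - y₂‖)
    -- `(x,y) ↦ ∇²_{yx} g(x,y)` is `ρ`-Lipschitz in operator norm in each variable
    (hyxLx : ∀ (y : H₂) (x₁ x₂ : H₁), ‖hessyx g x₁ y - hessyx g x₂ y‖ ≤ ρ * ‖x₁ - x₂‖)
    (hyxLy : ∀ (x : H₁) (y₁ y₂ : H₂), ‖hessyx g x y₁ - hessyx g x y₂‖ ≤ ρ * ‖y₁ - y₂‖)
    -- `y*(x)` is the (unique) minimizer of `g(x, ·)`, characterized by `∇_y g(x, y*(x)) = 0`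
    (ystar : H₁ → H₂)
    (hmin : ∀ (x : H₁) (z : H₂), g x (ystar x) ≤ g x z)
    (hstat : ∀ x : H₁, grady g x (ystar x) = 0)
    -- `Hinv x` is the inverse of `∇²_{yy} g(x, y*(x))`
    (Hinv : H₁ → H₂ →L[ℝ] H₂)
    (hHinv1 : ∀ x : H₁, (Hinv x).comp (hessyy g x (ystar x)) = ContinuousLinearMap.id ℝ H₂)
    (hHinv2 : ∀ x : H₁, (hessyy g x (ystar x)).comp (Hinv x) = ContinuousLinearMap.id ℝ H₂)
    -- `T(x) := (∇²_{yy} g(x, y*(x)))⁻¹ ∘ ∇²_{yx} g(x, y*(x))`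
    (T : H₁ → H₁ →L[ℝ] H₂)
    (hT : ∀ x : H₁, T x = (Hinv x).comp (hessyx g x (ystar x))) :
    (∀ x : H₁, ‖T x‖ ≤ L / μ) ∧
      ∀ x₁ x₂ : H₁,
        ‖T x₁ - T x₂‖ ≤ (L ^ 2 * ρ / μ ^ 3 + 2 * L * ρ / μ ^ 2 + ρ / μ) * ‖x₁ - x₂‖ := by
  -- Norm bound on the inverse Hessian
  have hHop : ∀ x : H₁, ‖Hinv x‖ ≤ 1 / μ := by
    intro x
    refine ContinuousLinearMap.opNorm_le_bound _ (by positivity) fun w => ?_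
    set v := Hinv x w with hv
    have hvw : hessyy g x (ystar x) v = w := by
      have := ContinuousLinearMap.ext_iff.mp (hHinv2 x) w
      simpa [ContinuousLinearMap.comp_apply] using this
    have h1 : μ * ‖v‖ ^ 2 ≤ ⟪w, v⟫ := by
      have := hpos x (ystar x) v
      rwa [hvw] at this
    have h2 : ⟪w, v⟫ ≤ ‖w‖ * ‖v‖ := real_inner_le_norm w v
    have h3 : μ * ‖v‖ ≤ ‖w‖ := by
      by_cases hv0 : ‖v‖ = 0
      · rw [hv0, mul_zero]; positivity
      · have hvpos : 0 < ‖v‖ := lt_of_le_of_ne (norm_nonneg v) (Ne.symm hv0)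
        nlinarith
    rw [div_mul_eq_mul_div, one_mul, le_div_iff₀ hμ]
    nlinarith
  -- Lipschitzness of y*
  have hys : ∀ x₁ x₂ : H₁, ‖ystar x₁ - ystar x₂‖ ≤ L / μ * ‖x₁ - x₂‖ := by
    intro x₁ x₂
    set d := ystar x₁ - ystar x₂ with hd
    have hm := grady_strong_mono' g μ hg hpos x₁ (ystar x₁) (ystar x₂)
    rw [hstat x₁, zero_sub] at hm
    have hcs : ⟪-grady g x₁ (ystar x₂), d⟫ ≤ ‖grady g x₁ (ystar x₂)‖ * ‖d‖ := by
      calc ⟪-grady g x₁ (ystar x₂), d⟫ ≤ ‖-grady g x₁ (ystar x₂)‖ * ‖d‖ :=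
            real_inner_le_norm _ _
        _ = ‖grady g x₁ (ystar x₂)‖ * ‖d‖ := by rw [norm_neg]
    have hgb : ‖grady g x₁ (ystar x₂)‖ ≤ L * ‖x₁ - x₂‖ := by
      have := hlipx (ystar x₂) x₁ x₂
      rwa [hstat x₂, sub_zero] at this
    have key : μ * ‖d‖ ≤ L * ‖x₁ - x₂‖ := by
      by_cases hd0 : ‖d‖ = 0
      · rw [hd0, mul_zero]; positivity
      · have hdpos : 0 < ‖d‖ := lt_of_le_of_ne (norm_nonneg d) (Ne.symm hd0)
        nlinarith [norm_nonneg (x₁ - x₂)]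
    rw [div_mul_eq_mul_div, le_div_iff₀ hμ]
    nlinarith
  -- Bound on T
  have hTbd : ∀ x : H₁, ‖T x‖ ≤ L / μ := by
    intro x
    rw [hT x]
    calc ‖(Hinv x).comp (hessyx g x (ystar x))‖ ≤ ‖Hinv x‖ * ‖hessyx g x (ystar x)‖ :=
          ContinuousLinearMap.opNorm_comp_le _ _
      _ ≤ (1 / μ) * L :=
          mul_le_mul (hHop x) (hyxbd x (ystar x)) (norm_nonneg _) (by positivity)
      _ = L / μ := by ring
  refine ⟨hTbd, fun x₁ x₂ => ?_⟩
  set s := ‖x₁ - x₂‖ with hs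
  have hs0 : 0 ≤ s := norm_nonneg _
  set K := ρ + ρ * (L / μ) with hK
  have hK0 : 0 ≤ K := by positivity
  set A₁ := hessyx g x₁ (ystar x₁) with hA₁
  set A₂ := hessyx g x₂ (ystar x₂) with hA₂
  set B₁ := hessyy g x₁ (ystar x₁) with hB₁
  set B₂ := hessyy g x₂ (ystar x₂) with hB₂
  -- Lipschitz bounds on the Hessian blocks along (x, y*(x))
  have hdA : ‖A₁ - A₂‖ ≤ K * s := by
    calc ‖A₁ - A₂‖
        ≤ ‖A₁ - hessyx g x₂ (ystar x₁)‖ + ‖hessyx g x₂ (ystar x₁) - A₂‖ := by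
          simpa using norm_sub_le_norm_sub_add_norm_sub A₁ (hessyx g x₂ (ystar x₁)) A₂
      _ ≤ ρ * s + ρ * (L / μ * s) := by
          gcongr
          · exact hyxLx (ystar x₁) x₁ x₂
          · exact le_trans (hyxLy x₂ (ystar x₁) (ystar x₂)) (by gcongr; exact hys x₁ x₂)
      _ = K * s := by rw [hK]; ring
  have hdB : ‖B₂ - B₁‖ ≤ K * s := by
    calc ‖B₂ - B₁‖
        ≤ ‖B₂ - hessyy g x₁ (ystar x₂)‖ + ‖hessyy g x₁ (ystar x₂) - B₁‖ := by
          simpa using norm_sub_le_norm_sub_add_norm_sub B₂ (hessyy g x₁ (ystar x₂)) B₁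
      _ ≤ ρ * s + ρ * (L / μ * s) := by
          gcongr
          · have := hyyLx (ystar x₂) x₂ x₁
            rwa [norm_sub_rev x₂ x₁, ← hs] at this
          · exact le_trans (hyyLy x₁ (ystar x₂) (ystar x₁))
              (by rw [norm_sub_rev]; gcongr; exact hys x₁ x₂)
      _ = K * s := by rw [hK]; ring
  -- Resolvent identity for the inverse Hessian
  have hid : Hinv x₁ - Hinv x₂ = ((Hinv x₁).comp (B₂ - B₁)).comp (Hinv x₂) := by
    have e1 : ∀ w, Hinv x₁ (B₁ w) = w := fun w => by
      have := ContinuousLinearMap.ext_iff.mp (hHinv1 x₁) w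
      simpa [ContinuousLinearMap.comp_apply] using this
    have e2 : ∀ w, B₂ (Hinv x₂ w) = w := fun w => by
      have := ContinuousLinearMap.ext_iff.mp (hHinv2 x₂) w
      simpa [ContinuousLinearMap.comp_apply] using this
    ext w
    simp [ContinuousLinearMap.sub_apply, ContinuousLinearMap.comp_apply, map_sub, e1, e2]
  have hdHinv : ‖Hinv x₁ - Hinv x₂‖ ≤ (1 / μ) * (K * s) * (1 / μ) := by
    rw [hid]
    calc ‖((Hinv x₁).comp (B₂ - B₁)).comp (Hinv x₂)‖
        ≤ ‖(Hinv x₁).comp (B₂ - B₁)‖ * ‖Hinv x₂‖ := ContinuousLinearMap.opNorm_comp_le _ _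
      _ ≤ ‖Hinv x₁‖ * ‖B₂ - B₁‖ * ‖Hinv x₂‖ := by
          gcongr; exact ContinuousLinearMap.opNorm_comp_le _ _
      _ ≤ (1 / μ) * (K * s) * (1 / μ) := by
          gcongr
          · exact hHop x₁
          · exact hHop x₂
  -- Decomposition of T x₁ - T x₂
  have hdec : T x₁ - T x₂ = (Hinv x₁).comp (A₁ - A₂) + (Hinv x₁ - Hinv x₂).comp A₂ := by
    ext w
    simp only [hT, ContinuousLinearMap.sub_apply, ContinuousLinearMap.add_apply,
      ContinuousLinearMap.comp_apply, map_sub, ← hA₁, ← hA₂]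
    abel
  have hbound : ‖T x₁ - T x₂‖ ≤ (1 / μ) * (K * s) + (1 / μ) * (K * s) * (1 / μ) * L := by
    rw [hdec]
    calc ‖(Hinv x₁).comp (A₁ - A₂) + (Hinv x₁ - Hinv x₂).comp A₂‖
        ≤ ‖(Hinv x₁).comp (A₁ - A₂)‖ + ‖(Hinv x₁ - Hinv x₂).comp A₂‖ := norm_add_le _ _
      _ ≤ ‖Hinv x₁‖ * ‖A₁ - A₂‖ + ‖Hinv x₁ - Hinv x₂‖ * ‖A₂‖ :=
          add_le_add (ContinuousLinearMap.opNorm_comp_le _ _)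
            (ContinuousLinearMap.opNorm_comp_le _ _)
      _ ≤ (1 / μ) * (K * s) + (1 / μ) * (K * s) * (1 / μ) * L := by
          gcongr <;>
            first
              | exact hHop x₁
              | exact hdA
              | exact hdHinv
              | exact hyxbd x₂ (ystar x₂)
  have heq : (1 / μ) * (K * s) + (1 / μ) * (K * s) * (1 / μ) * L
      = (L ^ 2 * ρ / μ ^ 3 + 2 * L * ρ / μ ^ 2 + ρ / μ) * s := by
    rw [hK]
    field_simp
    ring
  linarith [hbound, heq.le]
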